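/- Let q be a prime power. The number of F_{q^6}-rational points of the Hermitian curve H_q with affine equation X^{q+1} = Y^q + Y, including its single point at infinity, equals q^6 + 1 + q(q-1)q^3. -/

import Mathlib

open Finset Polynomial

section Helpers

variable {K : Type*} [Field K] [Fintype K] [DecidableEq K]

lemma rootCount_le (f : K → K) (P : K[X]) (hP : P ≠ 0) (hfP : ∀ x, f x = P.eval x) :
    (univ.filter fun x => f x = 0).card ≤ P.natDegree := by
  have h1 : (univ.filter fun x => f x = 0) ⊆ P.roots.toFinset := by
    intro x hx
    simp only [mem_filter, mem_univ, true_and] at hx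
    rw [Multiset.mem_toFinset, mem_roots', IsRoot, ← hfP]
    exact ⟨hP, hx⟩
  calc (univ.filter fun x => f x = 0).card ≤ P.roots.toFinset.card := card_le_card h1
    _ ≤ Multiset.card P.roots := P.roots.toFinset_card_le
    _ ≤ P.natDegree := P.card_roots'

lemma deg_step_add (P Q : K[X]) {n : ℕ} (hP : P.degree = n) (hQ : Q.degree < (n : WithBot ℕ)) :
    (P + Q).degree = n := by
  rw [degree_add_eq_left_of_degree_lt (by rw [hP]; exact hQ), hP]

lemma deg_step_sub (P Q : K[X]) {n : ℕ} (hP : P.degree = n) (hQ : Q.degree < (n : WithBot ℕ)) :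
    (P - Q).degree = n := by
  rw [degree_sub_eq_left_of_degree_lt (by rw [hP]; exact hQ), hP]

lemma deg_Xpow_lt {m n : ℕ} (h : m < n) : ((X : K[X]) ^ m).degree < (n : WithBot ℕ) := by
  rw [degree_X_pow]
  exact_mod_cast h

lemma deg_X_lt {n : ℕ} (h : 1 < n) : (X : K[X]).degree < (n : WithBot ℕ) := by
  rw [degree_X]
  exact_mod_cast h

lemma cnt_of_degree (f : K → K) (P : K[X]) {n : ℕ} (hd : P.degree = n)
    (hfP : ∀ x, f x = P.eval x) :
    (univ.filter fun x => f x = 0).card ≤ n := by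
  have hne : P ≠ 0 := by
    intro h
    rw [h, degree_zero] at hd
    exact (by simp : ((⊥ : WithBot ℕ) = (n : WithBot ℕ)) → False) hd
  have := rootCount_le f P hne hfP
  rwa [natDegree_eq_of_degree_eq_some hd] at this

lemma cnt_add2 (a : ℕ) (ha : 2 ≤ a) :
    ((univ : Finset K).filter fun x => x ^ a + x = 0).card ≤ a := by
  apply cnt_of_degree _ (X ^ a + X)
  · exact deg_step_add _ _ (degree_X_pow a) (deg_X_lt (by omega))
  · intro x; simp

lemma cnt_frob (a : ℕ) (ha : 2 ≤ a) :
    ((univ : Finset K).filter fun x => x ^ a = x).card ≤ a := by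
  have h2 := cnt_of_degree (fun x : K => x ^ a - x) (X ^ a - X)
    (deg_step_sub _ _ (degree_X_pow a) (deg_X_lt (by omega))) (fun x => by simp)
  calc ((univ : Finset K).filter fun x => x ^ a = x).card
      = ((univ : Finset K).filter fun x => x ^ a - x = 0).card := by
        apply congrArg
        apply filter_congr
        intro x _
        rw [sub_eq_zero]
    _ ≤ a := h2

lemma cnt_add3 (a b : ℕ) (hb : 1 ≤ b) (hab : b < a) :
    ((univ : Finset K).filter fun x => x ^ a + x ^ b + x = 0).card ≤ a := by
  apply cnt_of_degree _ (X ^ a + X ^ b + X)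
  · exact deg_step_add _ _ (deg_step_add _ _ (degree_X_pow a) (deg_Xpow_lt hab))
      (deg_X_lt (by omega))
  · intro x; simp

lemma cnt_M (q : ℕ) (hq : 2 ≤ q) :
    ((univ : Finset K).filter fun z =>
      z ^ q ^ 5 - z ^ q ^ 4 + z ^ q ^ 3 - z ^ q ^ 2 + z ^ q - z = 0).card ≤ q ^ 5 := by
  have h1 : q < q ^ 5 := by
    calc q = q ^ 1 := (pow_one q).symm
      _ < q ^ 5 := Nat.pow_lt_pow_right hq (by omega)
  have h2 : q ^ 2 < q ^ 5 := Nat.pow_lt_pow_right hq (by omega)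
  have h3 : q ^ 3 < q ^ 5 := Nat.pow_lt_pow_right hq (by omega)
  have h4 : q ^ 4 < q ^ 5 := Nat.pow_lt_pow_right hq (by omega)
  apply cnt_of_degree _ (X ^ q ^ 5 - X ^ q ^ 4 + X ^ q ^ 3 - X ^ q ^ 2 + X ^ q - X)
  · exact deg_step_sub _ _
      (deg_step_add _ _
        (deg_step_sub _ _
          (deg_step_add _ _
            (deg_step_sub _ _ (degree_X_pow (q ^ 5)) (deg_Xpow_lt h4))
            (deg_Xpow_lt h3))
          (deg_Xpow_lt h2))
        (deg_Xpow_lt h1))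
      (deg_X_lt (by omega))
  · intro x; simp

lemma fiber_card_eq {G : Type*} [AddCommGroup G] [Fintype G] [DecidableEq G]
    (g : G →+ G) {c y0 : G} (h : g y0 = c) :
    (univ.filter fun y => g y = c).card = (univ.filter fun y => g y = 0).card := by
  apply Finset.card_nbij' (fun y => y - y0) (fun y => y + y0)
  · intro a ha
    simp only [mem_coe, mem_filter, mem_univ, true_and] at *
    rw [map_sub, ha, h, sub_self]
  · intro a ha
    simp only [mem_coe, mem_filter, mem_univ, true_and] at *
    rw [map_add, ha, h, zero_add]
  · intro a _
    simp
  · intro a _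
    simp

lemma squeeze_count {G : Type*} [AddCommGroup G] [Fintype G] [DecidableEq G]
    (g : G →+ G) (S : Finset G) (A B : ℕ) (himg : ∀ y, g y ∈ S) (hS : S.card ≤ A)
    (hK : (univ.filter fun y => g y = 0).card ≤ B) (hcard : Fintype.card G = A * B) :
    (univ.filter fun y => g y = 0).card = B ∧ ∀ c ∈ S, ∃ y, g y = c := by
  classical
  set K := (univ.filter fun y => g y = 0).card with hKdef
  have hsub : univ.image g ⊆ S := by
    intro c hc
    obtain ⟨y, _, rfl⟩ := mem_image.1 hc
    exact himg y
  have hmain : Fintype.card G = (univ.image g).card * K := by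
    rw [← card_univ, card_eq_sum_card_image g univ,
      Finset.sum_congr rfl (fun c hc => ?_), sum_const, smul_eq_mul]
    obtain ⟨y0, _, hy0⟩ := mem_image.1 hc
    exact fiber_card_eq g hy0
  have hI : (univ.image g).card ≤ A := le_trans (card_le_card hsub) hS
  have hG0 : 0 < Fintype.card G := Fintype.card_pos
  have hA0 : 0 < A := by
    rcases Nat.eq_zero_or_pos A with h | h
    · rw [h, zero_mul] at hcard; omega
    · exact h
  have hB0 : 0 < B := by
    rcases Nat.eq_zero_or_pos B with h | h
    · rw [h, mul_zero] at hcard; omega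
    · exact h
  have hBK : B ≤ K := by
    have h1 : A * B ≤ A * K := by
      rw [← hcard, hmain]
      exact Nat.mul_le_mul_right K hI
    exact Nat.le_of_mul_le_mul_left h1 hA0
  have hKB : K = B := le_antisymm hK hBK
  refine ⟨hKB, ?_⟩
  have hIA : (univ.image g).card = A := by
    have h2 : (univ.image g).card * K = A * B := hmain.symm.trans hcard
    rw [hKB] at h2
    exact Nat.eq_of_mul_eq_mul_right hB0 h2
  have himS : univ.image g = S :=
    Finset.eq_of_subset_of_card_le hsub (by rw [hIA]; exact hS)
  intro c hc
  rw [← himS] at hc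
  obtain ⟨y, _, hy⟩ := mem_image.1 hc
  exact ⟨y, hy⟩

end Helpers

/-- The subfield of elements fixed by `x ↦ x ^ n`. -/
def fixedSubfield (F : Type*) [Field F] (n : ℕ) (hn : 1 ≤ n)
    (hadd : ∀ x y : F, (x + y) ^ n = x ^ n + y ^ n) : Subfield F where
  carrier := {x : F | x ^ n = x}
  mul_mem' := by
    intro a b ha hb
    simp only [Set.mem_setOf_eq] at *
    rw [mul_pow, ha, hb]
  one_mem' := one_pow n
  add_mem' := by
    intro a b ha hb
    simp only [Set.mem_setOf_eq] at *
    rw [hadd, ha, hb]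
  zero_mem' := zero_pow (by omega)
  neg_mem' := by
    intro a ha
    simp only [Set.mem_setOf_eq] at *
    have h0 : (0 : F) ^ n = 0 := zero_pow (by omega)
    have h1 := hadd a (-a)
    rw [add_neg_cancel, h0, ha] at h1
    linear_combination -h1
  inv_mem' := by
    intro a ha
    simp only [Set.mem_setOf_eq] at *
    rw [inv_pow, ha]

lemma mem_fixedSubfield {F : Type*} [Field F] {n : ℕ} {hn : 1 ≤ n}
    {hadd : ∀ x y : F, (x + y) ^ n = x ^ n + y ^ n} {x : F} :
    x ∈ fixedSubfield F n hn hadd ↔ x ^ n = x := Iff.rfl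
set_option maxHeartbeats 1000000

open Finset Polynomial

def Mmap (q : ℕ) {F : Type*} [Field F] (z : F) : F :=
  z ^ q ^ 5 - z ^ q ^ 4 + z ^ q ^ 3 - z ^ q ^ 2 + z ^ q - z

def Tmap (q : ℕ) {F : Type*} [Field F] (z : F) : F := z + z ^ q + z ^ q ^ 2

theorem stmt12 (p k q : ℕ) (hp : p.Prime) (hk : 0 < k) (hq : q = p ^ k)
    (F : Type*) [Field F] [Fintype F] (hF : Fintype.card F = q ^ 6) :
    Nat.card {P : F × F // P.1 ^ (q + 1) = P.2 ^ q + P.2} + 1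
      = q ^ 6 + 1 + q * (q - 1) * q ^ 3 := by
  classical
  have hq2 : 2 ≤ q := by
    rw [hq]
    calc 2 ≤ p := hp.two_le
      _ = p ^ 1 := (pow_one p).symm
      _ ≤ p ^ k := Nat.pow_le_pow_right hp.pos hk
  have hq0 : q ≠ 0 := by omega
  -- characteristic p
  haveI hchar : CharP F p := by
    obtain ⟨p', hp'⟩ := CharP.exists F
    haveI := hp'
    obtain ⟨n, hn_prime, hcard⟩ := FiniteField.card F p'
    have h1 : p' ^ (n : ℕ) = p ^ (k * 6) := by
      rw [← hcard, hF, hq, ← pow_mul]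
    have hdvd : p' ∣ p ^ (k * 6) := by
      rw [← h1]
      exact dvd_pow_self p' n.pos.ne'
    have h2 : p' ∣ p := Nat.Prime.dvd_of_dvd_pow hn_prime hdvd
    have h3 : p' = p := (Nat.prime_dvd_prime_iff_eq hn_prime hp).1 h2
    rwa [h3] at hp'
  haveI : Fact p.Prime := ⟨hp⟩
  have hqpow : ∀ (i : ℕ) (x y : F), (x + y) ^ q ^ i = x ^ q ^ i + y ^ q ^ i := by
    intro i x y
    rw [hq, ← pow_mul]
    exact add_pow_char_pow ..
  have hqpowsub : ∀ (i : ℕ) (x y : F), (x - y) ^ q ^ i = x ^ q ^ i - y ^ q ^ i := by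
    intro i x y
    rw [hq, ← pow_mul]
    exact sub_pow_char_pow ..
  have haddq : ∀ x y : F, (x + y) ^ q = x ^ q + y ^ q := by
    intro x y
    have := hqpow 1 x y
    simpa using this
  have hsubq : ∀ x y : F, (x - y) ^ q = x ^ q - y ^ q := by
    intro x y
    have := hqpowsub 1 x y
    simpa using this
  have h6 : ∀ x : F, x ^ q ^ 6 = x := by
    intro x
    rw [← hF]
    exact FiniteField.pow_card x
  have hper3 : ∀ x : F, x ^ q ^ 3 = x → x ^ q ^ 4 = x ^ q ∧ x ^ q ^ 5 = x ^ q ^ 2 := by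
    intro x hx
    constructor
    · rw [show q ^ 4 = q ^ 3 * q by ring, pow_mul, hx]
    · rw [show q ^ 5 = q ^ 3 * q ^ 2 by ring, pow_mul, hx]
  have hper2 : ∀ x : F, x ^ q ^ 2 = x →
      x ^ q ^ 3 = x ^ q ∧ x ^ q ^ 4 = x ∧ x ^ q ^ 5 = x ^ q := by
    intro x hx
    have h3 : x ^ q ^ 3 = x ^ q := by rw [show q ^ 3 = q ^ 2 * q by ring, pow_mul, hx]
    have h4 : x ^ q ^ 4 = x := by rw [show q ^ 4 = q ^ 2 * q ^ 2 by ring, pow_mul, hx, hx]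
    have h5 : x ^ q ^ 5 = x ^ q := by rw [show q ^ 5 = q ^ 2 * q ^ 3 by ring, pow_mul, hx, h3]
    exact ⟨h3, h4, h5⟩
  -- the additive map L y = y^q + y
  set LH : F →+ F := AddMonoidHom.mk' (fun y : F => y ^ q + y) (by
    intro x y
    show (x + y) ^ q + (x + y) = (x ^ q + x) + (y ^ q + y)
    rw [haddq]
    ring) with hLHdef
  have hLHapp : ∀ y : F, LH y = y ^ q + y := fun y => rfl
  have hML : ∀ y : F, Mmap q (LH y) = 0 := by
    intro y
    rw [hLHapp]
    have k5 : (y ^ q + y) ^ q ^ 5 = y ^ q ^ 6 + y ^ q ^ 5 := by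
      rw [hqpow 5, ← pow_mul, show q * q ^ 5 = q ^ 6 by ring]
    have k4 : (y ^ q + y) ^ q ^ 4 = y ^ q ^ 5 + y ^ q ^ 4 := by
      rw [hqpow 4, ← pow_mul, show q * q ^ 4 = q ^ 5 by ring]
    have k3 : (y ^ q + y) ^ q ^ 3 = y ^ q ^ 4 + y ^ q ^ 3 := by
      rw [hqpow 3, ← pow_mul, show q * q ^ 3 = q ^ 4 by ring]
    have k2 : (y ^ q + y) ^ q ^ 2 = y ^ q ^ 3 + y ^ q ^ 2 := by
      rw [hqpow 2, ← pow_mul, show q * q ^ 2 = q ^ 3 by ring]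
    have k1 : (y ^ q + y) ^ q = y ^ q ^ 2 + y ^ q := by
      rw [haddq, ← pow_mul, show q * q = q ^ 2 by ring]
    simp only [Mmap]
    rw [k5, k4, k3, k2, k1, h6 y]
    ring
  -- squeeze for L : kernel has size q, image = kernel of M
  have hcntL : (univ.filter fun y : F => LH y = 0).card ≤ q := by
    have h1 := cnt_add2 (K := F) q hq2
    have h2 : (univ.filter fun y : F => LH y = 0) = univ.filter fun y : F => y ^ q + y = 0 := by
      apply filter_congr
      intro x _
      rw [hLHapp]
    rw [h2]
    exact h1
  have hcntMF : (univ.filter fun z : F => Mmap q z = 0).card ≤ q ^ 5 := by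
    have h1 := cnt_M (K := F) q hq2
    have h2 : (univ.filter fun z : F => Mmap q z = 0)
        = univ.filter fun z : F =>
            z ^ q ^ 5 - z ^ q ^ 4 + z ^ q ^ 3 - z ^ q ^ 2 + z ^ q - z = 0 := by
      apply filter_congr
      intro x _
      simp [Mmap]
    rw [h2]
    exact h1
  obtain ⟨hLker, hLsurj⟩ := squeeze_count LH (univ.filter fun z : F => Mmap q z = 0) (q ^ 5) q
    (fun y => mem_filter.2 ⟨mem_univ _, hML y⟩) hcntMF hcntL (by rw [hF]; ring)
  have hLsurj' : ∀ c : F, Mmap q c = 0 → ∃ y, LH y = c := fun c hc =>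
    hLsurj c (mem_filter.2 ⟨mem_univ _, hc⟩)
  -- fiber counts
  have hfib : ∀ c : F, Fintype.card {y : F // c = y ^ q + y}
      = if Mmap q c = 0 then q else 0 := by
    intro c
    rw [Fintype.card_subtype]
    by_cases h : Mmap q c = 0
    · rw [if_pos h]
      obtain ⟨y0, hy0⟩ := hLsurj' c h
      have heq : (univ.filter fun y : F => c = y ^ q + y)
          = univ.filter fun y : F => LH y = c := by
        apply filter_congr
        intro y _
        rw [hLHapp, eq_comm]
      rw [heq, fiber_card_eq LH hy0, hLker]
    · rw [if_neg h, Finset.card_eq_zero, Finset.filter_eq_empty_iff]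
      intro y _
      intro hy
      apply h
      rw [hy]
      exact hML y
  have hN : Nat.card {P : F × F // P.1 ^ (q + 1) = P.2 ^ q + P.2}
      = ∑ x : F, if Mmap q (x ^ (q + 1)) = 0 then q else 0 := by
    rw [Nat.card_eq_fintype_card,
      Fintype.card_congr (Equiv.subtypeProdEquivSigmaSubtype
        fun (x y : F) => x ^ (q + 1) = y ^ q + y),
      Fintype.card_sigma]
    exact Finset.sum_congr rfl fun x _ => hfib (x ^ (q + 1))
  -- subfield E3 of cube-of-q fixed points
  have h3n : 1 ≤ q ^ 3 := Nat.one_le_pow _ _ (by omega)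
  set E3 : Subfield F := fixedSubfield F (q ^ 3) h3n (hqpow 3) with hE3def
  have hE3mem' : ∀ z : E3, ((z : F)) ^ q ^ 3 = (z : F) := fun z => z.2
  -- cardinality of E3
  set g3 : F →+ F := AddMonoidHom.mk' (fun y : F => y ^ q ^ 3 - y) (by
    intro x y
    show (x + y) ^ q ^ 3 - (x + y) = (x ^ q ^ 3 - x) + (y ^ q ^ 3 - y)
    rw [hqpow 3]
    ring) with hg3def
  have hg3app : ∀ y : F, g3 y = y ^ q ^ 3 - y := fun y => rfl
  have himg3 : ∀ y : F, g3 y ∈ univ.filter fun z : F => z ^ q ^ 3 + z = 0 := by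
    intro y
    refine mem_filter.2 ⟨mem_univ _, ?_⟩
    rw [hg3app, hqpowsub 3]
    have e1 : ((y ^ q ^ 3 : F)) ^ q ^ 3 = y ^ q ^ 6 := by
      rw [← pow_mul, show q ^ 3 * q ^ 3 = q ^ 6 by ring]
    rw [e1, h6]
    ring
  have h2q3 : 2 ≤ q ^ 3 := le_trans hq2 (Nat.le_self_pow (by omega) q)
  have hcntg3 : (univ.filter fun y : F => g3 y = 0).card ≤ q ^ 3 := by
    have h1 := cnt_frob (K := F) (q ^ 3) h2q3
    have h2 : (univ.filter fun y : F => g3 y = 0)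
        = univ.filter fun y : F => y ^ q ^ 3 = y := by
      apply filter_congr
      intro x _
      rw [hg3app, sub_eq_zero]
    rw [h2]
    exact h1
  obtain ⟨hker3, -⟩ := squeeze_count g3 (univ.filter fun z : F => z ^ q ^ 3 + z = 0)
    (q ^ 3) (q ^ 3) himg3 (cnt_add2 (q ^ 3) h2q3) hcntg3 (by rw [hF]; ring)
  have hker3' : (univ.filter fun y : F => y ^ q ^ 3 = y).card = q ^ 3 := by
    have h2 : (univ.filter fun y : F => g3 y = 0)
        = univ.filter fun y : F => y ^ q ^ 3 = y := by
      apply filter_congr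
      intro x _
      rw [hg3app, sub_eq_zero]
    rw [← h2, hker3]
  have hcardE3 : Fintype.card E3 = q ^ 3 := by
    rw [← hker3', ← card_univ]
    apply Finset.card_bij (fun (z : E3) _ => (z : F))
    · intro a _
      exact mem_filter.2 ⟨mem_univ _, a.2⟩
    · intro a _ b _ h
      exact Subtype.ext h
    · intro b hb
      exact ⟨⟨b, (mem_filter.1 hb).2⟩, mem_univ _, rfl⟩
  -- cardinality of E2-set, existence of θ
  set g2 : F →+ F := AddMonoidHom.mk' (fun y : F => y ^ q ^ 2 - y) (by
    intro x y
    show (x + y) ^ q ^ 2 - (x + y) = (x ^ q ^ 2 - x) + (y ^ q ^ 2 - y)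
    rw [hqpow 2]
    ring) with hg2def
  have hg2app : ∀ y : F, g2 y = y ^ q ^ 2 - y := fun y => rfl
  have himg2 : ∀ y : F, g2 y ∈ univ.filter fun z : F => z ^ q ^ 4 + z ^ q ^ 2 + z = 0 := by
    intro y
    refine mem_filter.2 ⟨mem_univ _, ?_⟩
    rw [hg2app, hqpowsub 4, hqpowsub 2]
    have e1 : ((y ^ q ^ 2 : F)) ^ q ^ 4 = y := by
      rw [← pow_mul, show q ^ 2 * q ^ 4 = q ^ 6 by ring, h6]
    have e2 : ((y ^ q ^ 2 : F)) ^ q ^ 2 = y ^ q ^ 4 := by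
      rw [← pow_mul, show q ^ 2 * q ^ 2 = q ^ 4 by ring]
    rw [e1, e2]
    ring
  have h2q2 : 2 ≤ q ^ 2 := le_trans hq2 (Nat.le_self_pow (by omega) q)
  have hq2lt4 : q ^ 2 < q ^ 4 := Nat.pow_lt_pow_right hq2 (by omega)
  have hcntg2 : (univ.filter fun y : F => g2 y = 0).card ≤ q ^ 2 := by
    have h1 := cnt_frob (K := F) (q ^ 2) h2q2
    have h2 : (univ.filter fun y : F => g2 y = 0)
        = univ.filter fun y : F => y ^ q ^ 2 = y := by
      apply filter_congr
      intro x _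
      rw [hg2app, sub_eq_zero]
    rw [h2]
    exact h1
  obtain ⟨hker2, -⟩ := squeeze_count g2 (univ.filter fun z : F => z ^ q ^ 4 + z ^ q ^ 2 + z = 0)
    (q ^ 4) (q ^ 2) himg2 (cnt_add3 (q ^ 4) (q ^ 2) (by omega) hq2lt4) hcntg2 (by rw [hF]; ring)
  have hker2' : (univ.filter fun y : F => y ^ q ^ 2 = y).card = q ^ 2 := by
    have h2 : (univ.filter fun y : F => g2 y = 0)
        = univ.filter fun y : F => y ^ q ^ 2 = y := by
      apply filter_congr
      intro x _
      rw [hg2app, sub_eq_zero]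
    rw [← h2, hker2]
  have hθex : ∃ θ : F, θ ^ q ^ 2 = θ ∧ θ ^ q ≠ θ := by
    by_contra hcon
    push_neg at hcon
    have hsub2 : (univ.filter fun x : F => x ^ q ^ 2 = x)
        ⊆ univ.filter fun x : F => x ^ q = x := by
      intro x hx
      exact mem_filter.2 ⟨mem_univ _, hcon x (mem_filter.1 hx).2⟩
    have hcard2 := card_le_card hsub2
    rw [hker2'] at hcard2
    have h1 := cnt_frob (K := F) q hq2
    have h2 : q ^ 2 ≤ q := le_trans hcard2 h1
    have h3 : q < q ^ 2 := by
      calc q = q ^ 1 := (pow_one q).symm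
        _ < q ^ 2 := Nat.pow_lt_pow_right hq2 (by omega)
    omega
  obtain ⟨θ, hθ2, hθ1⟩ := hθex
  -- the bijection (a, b) ↦ a + θ b from E3 × E3 to F
  have hcardprod : Fintype.card (E3 × E3) = Fintype.card F := by
    rw [Fintype.card_prod, hcardE3, hF]
    ring
  have hinj : Function.Injective (fun ab : E3 × E3 => (ab.1 : F) + θ * ab.2) := by
    rintro ⟨a, b⟩ ⟨a', b'⟩ h
    simp only at h
    have hb : (b : F) = b' := by
      by_contra hbb
      have hv : (b' : F) - b ≠ 0 := sub_ne_zero_of_ne fun hh => hbb hh.symm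
      have hθval : θ * ((b' : F) - b) = (a : F) - a' := by linear_combination -h
      have hθval2 : θ = ((a : F) - a') * ((b' : F) - b)⁻¹ :=
        (eq_mul_inv_iff_mul_eq₀ hv).2 hθval
      have hamem : ((a : F) - a') ^ q ^ 3 = (a : F) - a' := by
        rw [hqpowsub 3, hE3mem' a, hE3mem' a']
      have hbmem : ((b' : F) - b) ^ q ^ 3 = (b' : F) - b := by
        rw [hqpowsub 3, hE3mem' b', hE3mem' b]
      have hθ3 : θ ^ q ^ 3 = θ := by
        rw [hθval2, mul_pow, hamem, inv_pow, hbmem]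
      have hqq : θ ^ q = θ := by
        have h1 : θ ^ q ^ 3 = θ ^ q := by
          rw [show q ^ 3 = q ^ 2 * q by ring, pow_mul, hθ2]
        rw [← h1, hθ3]
      exact hθ1 hqq
    have hbeq : b = b' := Subtype.ext hb
    have haeq : a = a' := by
      apply Subtype.ext
      rw [hb] at h
      exact add_right_cancel h
    rw [Prod.ext_iff]
    exact ⟨haeq, hbeq⟩
  have hbij : Function.Bijective (fun ab : E3 × E3 => (ab.1 : F) + θ * ab.2) :=
    (Fintype.bijective_iff_injective_and_card _).2 ⟨hinj, hcardprod⟩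
  set e : E3 × E3 ≃ F := Equiv.ofBijective _ hbij with hedef
  -- zero iff lemma for E3 elements
  have hzero_iff : ∀ w : E3, w = 0 ↔ (w : F) = 0 := by
    intro w
    constructor
    · intro h
      rw [h]
      simp
    · intro h
      exact Subtype.ext (by simpa using h)
  -- Tmap maps E3 to E3
  have hTmem : ∀ z : F, z ^ q ^ 3 = z → (Tmap q z) ^ q ^ 3 = Tmap q z := by
    intro z hz
    obtain ⟨h4, h5⟩ := hper3 z hz
    simp only [Tmap]
    rw [hqpow 3, hqpow 3]
    have ea : ((z ^ q : F)) ^ q ^ 3 = z ^ q := by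
      rw [← pow_mul, show q * q ^ 3 = q ^ 4 by ring, h4]
    have eb : ((z ^ q ^ 2 : F)) ^ q ^ 3 = z ^ q ^ 2 := by
      rw [← pow_mul, show q ^ 2 * q ^ 3 = q ^ 5 by ring, h5]
    rw [hz, ea, eb]
  set Tr3 : E3 →+ E3 := AddMonoidHom.mk' (fun z : E3 => ⟨Tmap q (z : F), hTmem _ (hE3mem' z)⟩) (by
    intro x y
    apply Subtype.ext
    show Tmap q (((x + y : E3) : F)) = Tmap q (x : F) + Tmap q (y : F)
    push_cast
    simp only [Tmap]
    rw [haddq, hqpow 2]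
    ring) with hTr3def
  have hTr3app : ∀ z : E3, ((Tr3 z : E3) : F) = Tmap q (z : F) := fun z => rfl
  -- kernel of Tr3 on E3 has exactly q^2 elements
  have himgT : ∀ z : E3, Tr3 z ∈ univ.filter fun w : E3 => (w : F) ^ q = w := by
    intro z
    refine mem_filter.2 ⟨mem_univ _, ?_⟩
    rw [hTr3app]
    simp only [Tmap]
    have ea : ((z : F) ^ q) ^ q = (z : F) ^ q ^ 2 := by
      rw [← pow_mul, show q * q = q ^ 2 by ring]
    have eb : ((z : F) ^ q ^ 2) ^ q = (z : F) ^ q ^ 3 := by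
      rw [← pow_mul, show q ^ 2 * q = q ^ 3 by ring]
    rw [haddq, haddq, ea, eb, hE3mem' z]
    ring
  have hScard : (univ.filter fun w : E3 => (w : F) ^ q = w).card ≤ q := by
    have h1 := cnt_frob (K := E3) q hq2
    have h2 : (univ.filter fun w : E3 => (w : F) ^ q = w)
        = univ.filter fun w : E3 => w ^ q = w := by
      apply filter_congr
      intro w _
      rw [← SubmonoidClass.coe_pow]
      exact Subtype.ext_iff.symm
    rw [h2]
    exact h1
  have hcntT : (univ.filter fun z : E3 => Tr3 z = 0).card ≤ q ^ 2 := by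
    have h1 := cnt_add3 (K := E3) (q ^ 2) q (by omega)
      (by calc q = q ^ 1 := (pow_one q).symm
            _ < q ^ 2 := Nat.pow_lt_pow_right hq2 (by omega))
    have h2 : (univ.filter fun z : E3 => Tr3 z = 0)
        = univ.filter fun z : E3 => z ^ q ^ 2 + z ^ q + z = 0 := by
      apply filter_congr
      intro z _
      rw [hzero_iff, hzero_iff, hTr3app]
      push_cast
      simp only [Tmap]
      constructor
      · intro h
        linear_combination h
      · intro h
        linear_combination h
    rw [h2]
    exact h1
  obtain ⟨hTker, -⟩ := squeeze_count Tr3 (univ.filter fun w : E3 => (w : F) ^ q = w)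
    q (q ^ 2) himgT hScard hcntT (by rw [hcardE3]; ring)
  have hTker' : (univ.filter fun z : E3 => Tmap q (z : F) = 0).card = q ^ 2 := by
    have h2 : (univ.filter fun z : E3 => Tr3 z = 0)
        = univ.filter fun z : E3 => Tmap q (z : F) = 0 := by
      apply filter_congr
      intro z _
      rw [hzero_iff, hTr3app]
    rw [← h2, hTker]
  -- the set of q-th power fixed points inside E3 has exactly q elements
  have hphi1mem : ∀ z : E3, ((z : F) ^ q - z) ^ q ^ 3 = (z : F) ^ q - z := by
    intro z
    rw [hqpowsub 3]
    have ea : ((z : F) ^ q) ^ q ^ 3 = (z : F) ^ q := by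
      rw [← pow_mul, show q * q ^ 3 = q ^ 4 by ring, (hper3 _ (hE3mem' z)).1]
    rw [ea, hE3mem' z]
  set phi1 : E3 →+ E3 := AddMonoidHom.mk' (fun z : E3 => ⟨(z : F) ^ q - z, hphi1mem z⟩) (by
    intro x y
    apply Subtype.ext
    show ((x + y : E3) : F) ^ q - ((x + y : E3) : F)
      = ((x : F) ^ q - x) + ((y : F) ^ q - y)
    push_cast
    rw [haddq]
    ring) with hphi1def
  have hphi1app : ∀ z : E3, ((phi1 z : E3) : F) = (z : F) ^ q - z := fun z => rfl
  have himgphi1 : ∀ z : E3, phi1 z ∈ univ.filter fun w : E3 => Tmap q (w : F) = 0 := by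
    intro z
    refine mem_filter.2 ⟨mem_univ _, ?_⟩
    rw [hphi1app]
    simp only [Tmap]
    rw [hsubq, hqpowsub 2]
    have ea : ((z : F) ^ q) ^ q = (z : F) ^ q ^ 2 := by
      rw [← pow_mul, show q * q = q ^ 2 by ring]
    have eb : ((z : F) ^ q) ^ q ^ 2 = (z : F) ^ q ^ 3 := by
      rw [← pow_mul, show q * q ^ 2 = q ^ 3 by ring]
    rw [ea, eb, hE3mem' z]
    ring
  have hcntphi1 : (univ.filter fun z : E3 => phi1 z = 0).card ≤ q := by
    have h1 := cnt_frob (K := E3) q hq2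
    have h2 : (univ.filter fun z : E3 => phi1 z = 0)
        = univ.filter fun z : E3 => z ^ q = z := by
      apply filter_congr
      intro z _
      rw [hzero_iff, hphi1app, sub_eq_zero, ← SubmonoidClass.coe_pow]
      exact Subtype.ext_iff.symm
    rw [h2]
    exact h1
  obtain ⟨hphi1ker, -⟩ := squeeze_count phi1 (univ.filter fun w : E3 => Tmap q (w : F) = 0)
    (q ^ 2) q himgphi1 (le_of_eq hTker') hcntphi1 (by rw [hcardE3]; ring)
  have hE1count : (univ.filter fun b : E3 => (b : F) ^ q = b).card = q := by
    have h2 : (univ.filter fun z : E3 => phi1 z = 0)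
        = univ.filter fun b : E3 => (b : F) ^ q = b := by
      apply filter_congr
      intro z _
      rw [hzero_iff, hphi1app, sub_eq_zero]
    rw [← h2, hphi1ker]
  -- algebraic lemmas about Mmap and Tmap
  have hMf_E3 : ∀ d : F, d ^ q ^ 3 = d → Mmap q d = 0 := by
    intro d hd
    obtain ⟨h4, h5⟩ := hper3 d hd
    simp only [Mmap]
    rw [hd, h4, h5]
    ring
  have hMf_theta : ∀ η d : F, η ^ q ^ 2 = η → d ^ q ^ 3 = d →
      Mmap q (η * d) = (η ^ q - η) * Tmap q d := by
    intro η d hη hd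
    obtain ⟨hd4, hd5⟩ := hper3 d hd
    obtain ⟨hη3, hη4, hη5⟩ := hper2 η hη
    simp only [Mmap, Tmap]
    rw [mul_pow, mul_pow, mul_pow, mul_pow, mul_pow, hη3, hη4, hη5, hη, hd, hd4, hd5]
    ring
  have hMadd : ∀ u v : F, Mmap q (u + v) = Mmap q u + Mmap q v := by
    intro u v
    simp only [Mmap]
    rw [hqpow 5, hqpow 4, hqpow 3, hqpow 2, haddq]
    ring
  have hTsub : ∀ u v : F, Tmap q (u - v) = Tmap q u - Tmap q v := by
    intro u v
    simp only [Tmap]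
    rw [hsubq, hqpowsub 2]
    ring
  have hTswap : ∀ A B : F, A ^ q ^ 3 = A → B ^ q ^ 3 = B →
      Tmap q (A ^ q * B) = Tmap q (A * B ^ q ^ 2) := by
    intro A B hA hB
    simp only [Tmap]
    have e1 : ((A ^ q * B : F)) ^ q = A ^ q ^ 2 * B ^ q := by
      rw [mul_pow, ← pow_mul, show q * q = q ^ 2 by ring]
    have e2 : ((A ^ q * B : F)) ^ q ^ 2 = A * B ^ q ^ 2 := by
      rw [mul_pow, ← pow_mul, show q * q ^ 2 = q ^ 3 by ring, hA]
    have e3 : ((A * B ^ q ^ 2 : F)) ^ q = A ^ q * B := by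
      rw [mul_pow, ← pow_mul, show q ^ 2 * q = q ^ 3 by ring, hB]
    have e4 : ((A * B ^ q ^ 2 : F)) ^ q ^ 2 = A ^ q ^ 2 * B ^ q := by
      rw [mul_pow, ← pow_mul, show q ^ 2 * q ^ 2 = q ^ 4 by ring, (hper3 B hB).1]
    rw [e1, e2, e3, e4]
    ring
  -- the main pointwise identity
  have hcond : ∀ a b : E3,
      (Mmap q (((a : F) + θ * b) ^ (q + 1)) = 0) ↔
        Tmap q ((a : F) * ((b : F) ^ q ^ 2 - (b : F) ^ q)) = 0 := by
    intro a b
    have hA : (a : F) ^ q ^ 3 = a := hE3mem' a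
    have hB : (b : F) ^ q ^ 3 = b := hE3mem' b
    have hstep : ((a : F) + θ * b) ^ (q + 1)
        = (a : F) * (a : F) ^ q + θ ^ q * ((a : F) * (b : F) ^ q)
          + θ * ((a : F) ^ q * b) + (θ * θ ^ q) * ((b : F) * (b : F) ^ q) := by
      rw [pow_succ, haddq, mul_pow]
      ring
    have hAq : ((a : F) ^ q) ^ q ^ 3 = (a : F) ^ q := by
      rw [pow_right_comm, hA]
    have hBq : ((b : F) ^ q) ^ q ^ 3 = (b : F) ^ q := by
      rw [pow_right_comm, hB]
    have hAA : ((a : F) * (a : F) ^ q) ^ q ^ 3 = (a : F) * (a : F) ^ q := by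
      rw [mul_pow, hA, hAq]
    have hAB : ((a : F) * (b : F) ^ q) ^ q ^ 3 = (a : F) * (b : F) ^ q := by
      rw [mul_pow, hA, hBq]
    have hA'B : ((a : F) ^ q * (b : F)) ^ q ^ 3 = (a : F) ^ q * b := by
      rw [mul_pow, hAq, hB]
    have hBB : ((b : F) * (b : F) ^ q) ^ q ^ 3 = (b : F) * (b : F) ^ q := by
      rw [mul_pow, hB, hBq]
    have hθq2 : (θ ^ q) ^ q ^ 2 = θ ^ q := by
      rw [pow_right_comm, hθ2]
    have hθθ : (θ * θ ^ q) ^ q ^ 2 = θ * θ ^ q := by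
      rw [mul_pow, hθ2, hθq2]
    have hc1 : (θ ^ q) ^ q = θ := by
      rw [← pow_mul, show q * q = q ^ 2 by ring, hθ2]
    have hfact : Tmap q ((a : F) * (b : F) ^ q ^ 2) - Tmap q ((a : F) * (b : F) ^ q)
        = Tmap q ((a : F) * ((b : F) ^ q ^ 2 - (b : F) ^ q)) := by
      rw [← hTsub]
      congr 1
      ring
    have hkey : Mmap q (((a : F) + θ * b) ^ (q + 1))
        = (θ ^ q - θ) * Tmap q ((a : F) * ((b : F) ^ q ^ 2 - (b : F) ^ q)) := by
      rw [hstep, hMadd, hMadd, hMadd, hMf_E3 _ hAA, hMf_theta _ _ hθq2 hAB,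
        hMf_theta _ _ hθ2 hA'B, hMf_theta _ _ hθθ hBB, hc1]
      have hc2 : (θ * θ ^ q) ^ q = θ * θ ^ q := by
        rw [mul_pow, hc1]
        ring
      rw [hc2]
      linear_combination (θ ^ q - θ) * (hTswap (a : F) (b : F) hA hB) + (θ ^ q - θ) * hfact
    rw [hkey, mul_eq_zero]
    constructor
    · intro h
      rcases h with h | h
      · exact absurd (sub_eq_zero.1 h) hθ1
      · exact h
    · intro h
      exact Or.inr h
  -- transform the sum over F to a sum over E3 × E3
  have hsum1 : (∑ x : F, if Mmap q (x ^ (q + 1)) = 0 then q else 0)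
      = ∑ ab : E3 × E3,
          if Tmap q ((ab.1 : F) * ((ab.2 : F) ^ q ^ 2 - (ab.2 : F) ^ q)) = 0 then q else 0 := by
    rw [← Equiv.sum_comp e (fun x : F => if Mmap q (x ^ (q + 1)) = 0 then q else 0)]
    apply Finset.sum_congr rfl
    intro ab _
    have happ : e ab = (ab.1 : F) + θ * ab.2 := rfl
    rw [happ]
    exact if_congr (hcond ab.1 ab.2) rfl rfl
  have hsum2 : (∑ ab : E3 × E3,
        if Tmap q ((ab.1 : F) * ((ab.2 : F) ^ q ^ 2 - (ab.2 : F) ^ q)) = 0 then q else 0)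
      = ∑ b : E3, ∑ a : E3,
          if Tmap q ((a : F) * ((b : F) ^ q ^ 2 - (b : F) ^ q)) = 0 then q else 0 := by
    rw [Fintype.sum_prod_type]
    exact Finset.sum_comm
  have hTmap0 : Tmap q (0 : F) = 0 := by
    simp [Tmap, zero_pow hq0, zero_pow (pow_ne_zero 2 hq0)]
  -- inner sums
  have hinner : ∀ b : E3,
      (∑ a : E3, if Tmap q ((a : F) * ((b : F) ^ q ^ 2 - (b : F) ^ q)) = 0 then q else 0)
        = if (b : F) ^ q = b then q ^ 3 * q else q ^ 2 * q := by
    intro b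
    by_cases hb : (b : F) ^ q = b
    · rw [if_pos hb]
      have hb2 : (b : F) ^ q ^ 2 = (b : F) ^ q := by
        rw [show q ^ 2 = q * q by ring, pow_mul, hb]
        exact hb
      have hall : ∀ a : E3, Tmap q ((a : F) * ((b : F) ^ q ^ 2 - (b : F) ^ q)) = 0 := by
        intro a
        rw [hb2, sub_self, mul_zero, hTmap0]
      rw [Finset.sum_congr rfl fun a _ => by rw [hall a, if_pos rfl]]
      rw [sum_const, smul_eq_mul, card_univ, hcardE3]
    · rw [if_neg hb]
      have hBne : (b : F) ^ q ^ 2 - (b : F) ^ q ≠ 0 := by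
        intro h0
        apply hb
        have h1 : ((b : F) ^ q - (b : F)) ^ q = 0 := by
          rw [hsubq, ← pow_mul, show q * q = q ^ 2 by ring]
          exact h0
        have h2 : (b : F) ^ q - (b : F) = 0 := (pow_eq_zero_iff hq0).1 h1
        exact sub_eq_zero.1 h2
      have hBmem : ((b : F) ^ q ^ 2 - (b : F) ^ q) ^ q ^ 3
          = (b : F) ^ q ^ 2 - (b : F) ^ q := by
        obtain ⟨h4, h5⟩ := hper3 _ (hE3mem' b)
        rw [hqpowsub 3]
        have e1 : (((b : F) ^ q ^ 2)) ^ q ^ 3 = (b : F) ^ q ^ 2 := by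
          rw [← pow_mul, show q ^ 2 * q ^ 3 = q ^ 5 by ring, h5]
        have e2 : (((b : F) ^ q)) ^ q ^ 3 = (b : F) ^ q := by
          rw [← pow_mul, show q * q ^ 3 = q ^ 4 by ring, h4]
        rw [e1, e2]
      set eE : E3 := ⟨(b : F) ^ q ^ 2 - (b : F) ^ q, hBmem⟩ with heEdef
      have heEne : eE ≠ 0 := by
        intro h0
        apply hBne
        have := congrArg (fun z : E3 => (z : F)) h0
        exact this
      have hcount : (univ.filter fun a : E3 =>
            Tmap q ((a : F) * ((b : F) ^ q ^ 2 - (b : F) ^ q)) = 0).card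
          = (univ.filter fun z : E3 => Tmap q (z : F) = 0).card := by
        apply Finset.card_nbij' (fun a => a * eE) (fun z => z * eE⁻¹)
        · intro a ha
          simp only [mem_coe, mem_filter, mem_univ, true_and] at *
          rw [show ((a * eE : E3) : F) = (a : F) * ((b : F) ^ q ^ 2 - (b : F) ^ q) from rfl]
          exact ha
        · intro z hz
          simp only [mem_coe, mem_filter, mem_univ, true_and] at *
          rw [show ((z * eE⁻¹ : E3) : F)
              = (z : F) * ((b : F) ^ q ^ 2 - (b : F) ^ q)⁻¹ from rfl,
            inv_mul_cancel_right₀ hBne]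
          exact hz
        · intro a _
          exact mul_inv_cancel_right₀ heEne a
        · intro z _
          exact inv_mul_cancel_right₀ heEne z
      rw [← Finset.sum_filter, sum_const, smul_eq_mul, hcount, hTker']
  -- final count
  have hfinal : (∑ b : E3, if (b : F) ^ q = b then q ^ 3 * q else q ^ 2 * q)
      = q * (q ^ 3 * q) + (q ^ 3 - q) * (q ^ 2 * q) := by
    rw [Finset.sum_ite, sum_const, sum_const, smul_eq_mul, smul_eq_mul, hE1count]
    have hnot := Finset.card_filter_add_card_filter_not
      (s := (univ : Finset E3)) (p := fun b : E3 => (b : F) ^ q = b)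
    rw [card_univ, hcardE3, hE1count] at hnot
    have hq3q : q ≤ q ^ 3 := Nat.le_self_pow (by omega) q
    have hcc : (univ.filter fun b : E3 => ¬ (b : F) ^ q = b).card = q ^ 3 - q := by omega
    rw [hcc]
  rw [hN, hsum1, hsum2, Finset.sum_congr rfl fun b _ => hinner b, hfinal]
  obtain ⟨m, rfl⟩ : ∃ m, q = m + 1 := ⟨q - 1, by omega⟩
  have e1 : (m + 1) ^ 3 - (m + 1) = m ^ 3 + 3 * m ^ 2 + 2 * m := by
    have h3 : (m + 1) ^ 3 = m ^ 3 + 3 * m ^ 2 + 3 * m + 1 := by ring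
    omega
  have e2 : (m + 1) - 1 = m := by omega
  rw [e1, e2]
  ring
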